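/- Under the sequential randomization assumption with L̄(1) = (X̄(1), W̄(1)) and taking Z̄(1) = W̄(1), the functions h1(ā(1), l̄(1)) = E[Y | ā(1), l̄(1)] and h0(ā(1), l(0)) = E[h1(ā(1), L̄(1)) | a(0), L(0) = l(0)] solve the outcome-bridge integral equations E[Y | ā(1), z̄(1), x̄(1)] = E[H1(ā(1)) | ā(1), z̄(1), x̄(1)] and E[H1(ā(1)) | a(0), z(0), x(0)] = E[H0(ā(1)) | a(0), z(0), x(0)], and the resulting proximal g-formula E[h0(ā(1), L(0))] coincides with Robins' g-formula for E[Y_{ā(1)}]. -/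

import Mathlib

open Finset MeasureTheory

open scoped Classical

/-- Probability of an event on a finite outcome space with mass function `p`. -/
noncomputable def pr {Ω : Type*} [Fintype Ω] (p : Ω → ℝ) (E : Ω → Prop) : ℝ :=
  ∑ ω, if E ω then p ω else 0

/-- Conditional expectation `E[f | E]` on a finite outcome space. -/
noncomputable def cexp {Ω : Type*} [Fintype Ω] (p : Ω → ℝ) (f : Ω → ℝ) (E : Ω → Prop) : ℝ :=
  (∑ ω, if E ω then p ω * f ω else 0) / pr p E

/-- Conditional probability `P(E | F)` on a finite outcome space. -/
noncomputable def cprob {Ω : Type*} [Fintype Ω] (p : Ω → ℝ) (E F : Ω → Prop) : ℝ :=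
  pr p (fun ω => E ω ∧ F ω) / pr p F

/-- Expectation on a finite outcome space. -/
noncomputable def pexp {Ω : Type*} [Fintype Ω] (p : Ω → ℝ) (f : Ω → ℝ) : ℝ :=
  ∑ ω, p ω * f ω

/-- `S` is conditionally independent of `T` given `C`:  for every pair of (bounded) test
functions `F, G` and every value `c` of `C` with positive probability, the conditional
expectation of the product factorizes. -/
def CondIndep {Ω α β γ : Type*} [Fintype Ω] (p : Ω → ℝ)
    (S : Ω → α) (T : Ω → β) (C : Ω → γ) : Prop :=
  ∀ (F : α → ℝ) (G : β → ℝ) (c : γ), pr p (fun ω => C ω = c) ≠ 0 →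
    cexp p (fun ω => F (S ω) * G (T ω)) (fun ω => C ω = c) =
      cexp p (fun ω => F (S ω)) (fun ω => C ω = c) *
        cexp p (fun ω => G (T ω)) (fun ω => C ω = c)

section Aux

variable {Ω : Type*} [Fintype Ω]

lemma event_ext {E E' : Ω → Prop} (h : ∀ ω, E ω ↔ E' ω) : E = E' :=
  funext fun ω => propext (h ω)

lemma pr_nonneg (p : Ω → ℝ) (hp : ∀ ω, 0 ≤ p ω) (E : Ω → Prop) : 0 ≤ pr p E := by
  refine Finset.sum_nonneg fun ω _ => ?_
  split <;> simp [hp ω]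

lemma le_pr (p : Ω → ℝ) (hp : ∀ ω, 0 ≤ p ω) (E : Ω → Prop) {ω : Ω} (hE : E ω) :
    p ω ≤ pr p E := by
  have := Finset.single_le_sum (f := fun ω => if E ω then p ω else 0)
    (fun i _ => by split <;> simp [hp i]) (Finset.mem_univ ω)
  simpa [hE, pr] using this

lemma pr_pos (p : Ω → ℝ) (hp : ∀ ω, 0 ≤ p ω) (E : Ω → Prop) {ω : Ω}
    (hE : E ω) (hω : p ω ≠ 0) : 0 < pr p E :=
  lt_of_lt_of_le (lt_of_le_of_ne (hp ω) (Ne.symm hω)) (le_pr p hp E hE)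

lemma cexp_congr (p : Ω → ℝ) {f g : Ω → ℝ} {E : Ω → Prop}
    (h : ∀ ω, E ω → f ω = g ω) : cexp p f E = cexp p g E := by
  unfold cexp
  congr 1
  refine Finset.sum_congr rfl fun ω _ => ?_
  split
  · next hω => rw [h ω hω]
  · rfl

lemma cexp_const (p : Ω → ℝ) {E : Ω → Prop} (hE : pr p E ≠ 0) (c : ℝ) :
    cexp p (fun _ => c) E = c := by
  unfold cexp
  rw [show (∑ ω, if E ω then p ω * c else 0) = (∑ ω, if E ω then p ω else 0) * c by
    rw [Finset.sum_mul]; exact Finset.sum_congr rfl fun ω _ => by split <;> simp]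
  rw [show (∑ ω, if E ω then p ω else 0) = pr p E from rfl]
  field_simp

/-- If `P(E ∧ F) = 0` would force `P(E|F) = 0`, positivity of `P(E|F)` gives
`P(E ∧ F) ≠ 0`. -/
lemma cprob_num_ne (p : Ω → ℝ) (hp : ∀ ω, 0 ≤ p ω) {E F : Ω → Prop}
    (hF : pr p F ≠ 0) (h : 0 < cprob p E F) : pr p (fun ω => E ω ∧ F ω) ≠ 0 := by
  intro h0
  rw [cprob, h0, zero_div] at h
  exact lt_irrefl 0 h

private lemma alg (N M q qA : ℝ) (hq : q ≠ 0) (hqA : qA ≠ 0)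
    (h : N / q = qA / q * (M / q)) : N / qA = M / q := by
  field_simp at h ⊢
  apply mul_right_cancel₀ hq
  ring_nf
  ring_nf at h
  linear_combination q * h

/-- `E[V | S = a, C = c] = E[V | C = c]` under conditional independence of `S` and `V`
given `C`. -/
lemma condIndep_cexp {α γ : Type*} (p : Ω → ℝ) (S : Ω → α) (V : Ω → ℝ) (C : Ω → γ)
    (hCI : CondIndep p S V C) (a : α) (c : γ)
    (hq : pr p (fun ω => C ω = c) ≠ 0)
    (hqA : pr p (fun ω => S ω = a ∧ C ω = c) ≠ 0) :
    cexp p V (fun ω => S ω = a ∧ C ω = c) = cexp p V (fun ω => C ω = c) := by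
  have key := hCI (fun x => if x = a then 1 else 0) id c hq
  set q := pr p (fun ω => C ω = c) with hqdef
  set qA := pr p (fun ω => S ω = a ∧ C ω = c) with hqAdef
  have hN : (∑ ω, if C ω = c then p ω * ((if S ω = a then (1:ℝ) else 0) * V ω) else 0)
      = ∑ ω, @ite ℝ (S ω = a ∧ C ω = c) (Classical.propDecidable _) (p ω * V ω) 0 := by
    refine Finset.sum_congr rfl fun ω _ => ?_
    by_cases h1 : C ω = c <;> by_cases h2 : S ω = a <;> simp [h1, h2]
  have hA : (∑ ω, if C ω = c then p ω * (if S ω = a then (1:ℝ) else 0) else 0) = qA := by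
    rw [hqAdef]; unfold pr
    refine Finset.sum_congr rfl fun ω _ => ?_
    by_cases h1 : C ω = c <;> by_cases h2 : S ω = a <;> simp [h1, h2]
  unfold cexp at key ⊢
  simp only [id] at key
  rw [hN, hA] at key
  exact alg _ _ _ _ hq hqA key

lemma mul_cexp (p : Ω → ℝ) (f : Ω → ℝ) (E : Ω → Prop) (c : ℝ) :
    c * cexp p f E = ∑ ω, c / pr p E * (if E ω then p ω * f ω else 0) := by
  unfold cexp
  rw [← Finset.mul_sum]
  ring

/-- Conditional tower property: numerator form. -/
lemma ctower_num {γ : Type*} (p : Ω → ℝ) (hp : ∀ ω, 0 ≤ p ω) (V g : Ω → ℝ)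
    (E : Ω → Prop) (T : Ω → γ)
    (hg : ∀ ω, E ω → p ω ≠ 0 → g ω = cexp p V (fun ω' => E ω' ∧ T ω' = T ω)) :
    (∑ ω, if E ω then p ω * g ω else 0) = ∑ ω, if E ω then p ω * V ω else 0 := by
  have step1 : ∀ ω, (if E ω then p ω * g ω else 0) =
      ∑ ω', if E ω ∧ E ω' ∧ T ω' = T ω then
        p ω * (p ω' * V ω') / pr p (fun x => E x ∧ T x = T ω') else 0 := by
    intro ω
    by_cases hE : E ω
    · by_cases hpω : p ω = 0
      · rw [if_pos hE, hpω, zero_mul]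
        symm; refine Finset.sum_eq_zero fun ω' _ => ?_
        split
        · simp
        · rfl
      · rw [if_pos hE, hg ω hE hpω, mul_cexp]
        refine Finset.sum_congr rfl fun ω' _ => ?_
        by_cases h' : E ω' ∧ T ω' = T ω
        · rw [h'.2, if_pos (show E ω' ∧ T ω = T ω from ⟨h'.1, rfl⟩),
            if_pos (show E ω ∧ E ω' ∧ T ω = T ω from ⟨hE, h'.1, rfl⟩)]
          ring
        · rw [if_neg (show ¬(E ω' ∧ T ω' = T ω) from h'),
            if_neg (fun h => h' ⟨h.2.1, h.2.2⟩), mul_zero]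
    · rw [if_neg hE]
      symm; refine Finset.sum_eq_zero fun ω' _ => ?_
      exact if_neg (fun h => hE h.1)
  calc (∑ ω, if E ω then p ω * g ω else 0)
      = ∑ ω, ∑ ω', if E ω ∧ E ω' ∧ T ω' = T ω then
          p ω * (p ω' * V ω') / pr p (fun x => E x ∧ T x = T ω') else 0 :=
        Finset.sum_congr rfl fun ω _ => step1 ω
    _ = ∑ ω', ∑ ω, if E ω ∧ E ω' ∧ T ω' = T ω then
          p ω * (p ω' * V ω') / pr p (fun x => E x ∧ T x = T ω') else 0 :=
        Finset.sum_comm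
    _ = ∑ ω', if E ω' then p ω' * V ω' else 0 := by
        refine Finset.sum_congr rfl fun ω' _ => ?_
        by_cases hE' : E ω'
        · set q := pr p (fun x => E x ∧ T x = T ω') with hqdef
          by_cases hq : q = 0
          · have hp' : p ω' = 0 := le_antisymm
              (hq ▸ le_pr p hp (fun x => E x ∧ T x = T ω') ⟨hE', rfl⟩) (hp ω')
            rw [if_pos hE', hp', zero_mul]
            refine Finset.sum_eq_zero fun ω _ => ?_
            split
            · simp
            · rfl
          · have hterm : ∀ ω, (if E ω ∧ E ω' ∧ T ω' = T ω then
                p ω * (p ω' * V ω') / q else 0)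
                = (if E ω ∧ T ω = T ω' then p ω else 0) * (p ω' * V ω' / q) := by
              intro ω
              by_cases h : E ω ∧ T ω = T ω'
              · rw [if_pos h, if_pos ⟨h.1, hE', h.2.symm⟩]; ring
              · rw [if_neg h, if_neg (fun h2 => h ⟨h2.1, h2.2.2.symm⟩), zero_mul]
            have hqsum : (∑ ω, if E ω ∧ T ω = T ω' then p ω else 0) = q := by
              rw [hqdef]; unfold pr
              refine Finset.sum_congr rfl fun ω _ => ?_
              by_cases h : E ω ∧ T ω = T ω' <;> simp [h]
            rw [Finset.sum_congr rfl fun ω _ => hterm ω, ← Finset.sum_mul, hqsum,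
              if_pos hE']
            field_simp
        · rw [if_neg hE']
          refine Finset.sum_eq_zero fun ω _ => ?_
          exact if_neg (fun h => hE' h.2.1)

/-- Conditional tower property. -/
lemma ctower {γ : Type*} (p : Ω → ℝ) (hp : ∀ ω, 0 ≤ p ω) (V g : Ω → ℝ)
    (E : Ω → Prop) (T : Ω → γ)
    (hg : ∀ ω, E ω → p ω ≠ 0 → g ω = cexp p V (fun ω' => E ω' ∧ T ω' = T ω)) :
    cexp p g E = cexp p V E := by
  unfold cexp
  rw [ctower_num p hp V g E T hg]

/-- Unconditional tower property. -/
lemma tower {γ : Type*} (p : Ω → ℝ) (hp : ∀ ω, 0 ≤ p ω)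
    (V g : Ω → ℝ) (T : Ω → γ)
    (hg : ∀ ω, p ω ≠ 0 → g ω = cexp p V (fun ω' => T ω' = T ω)) :
    pexp p g = pexp p V := by
  have h := ctower_num p hp V g (fun _ => True) T (fun ω _ hω => by
    rw [hg ω hω]
    congr 1
    exact funext fun ω' => propext (by simp))
  simpa [pexp] using h

end Aux

/-- under sequential randomization given `L̄(1) = (X̄(1), W̄(1))` and
taking `Z̄(1) = W̄(1)`, the iterated regressions `h1(ā, l̄) = E[Y | ā, l̄]` and
`h0(ā, l0) = E[h1(ā, L̄(1)) | a(0), L(0) = l0]` solve the outcome-bridge integral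
equations, and `E[h0(ā, L(0))]` coincides with Robins' g-formula for `E[Y_{ā}]`. -/
theorem stmt_10 {Ω 𝒳0 𝒳1 𝒲0 𝒲1 : Type*} [Fintype Ω]
    (p : Ω → ℝ) (hp : ∀ ω, 0 ≤ p ω) (hsum : ∑ ω, p ω = 1)
    (A0 A1 : Ω → Bool) (X0 : Ω → 𝒳0) (X1 : Ω → 𝒳1) (W0 : Ω → 𝒲0) (W1 : Ω → 𝒲1)
    (Y : Ω → ℝ) (Y' : Bool → Bool → Ω → ℝ) (a0 a1 : Bool)
    (hcons : ∀ ω, Y ω = Y' (A0 ω) (A1 ω) ω)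
    -- sequential randomization given L̄(1) = (X̄(1), W̄(1))
    (hSRA0 : CondIndep p A0 (fun ω => Y' a0 a1 ω) (fun ω => (X0 ω, W0 ω)))
    (hSRA1 : CondIndep p A1 (fun ω => Y' a0 a1 ω)
      (fun ω => (A0 ω, X0 ω, W0 ω, X1 ω, W1 ω)))
    -- positivity
    (hpos0 : ∀ (a : Bool) x0 w0, pr p (fun ω => X0 ω = x0 ∧ W0 ω = w0) ≠ 0 →
      0 < cprob p (fun ω => A0 ω = a) (fun ω => X0 ω = x0 ∧ W0 ω = w0))
    (hpos1 : ∀ (a a' : Bool) x0 w0 x1 w1,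
      pr p (fun ω => A0 ω = a' ∧ X0 ω = x0 ∧ W0 ω = w0 ∧ X1 ω = x1 ∧ W1 ω = w1) ≠ 0 →
      0 < cprob p (fun ω => A1 ω = a)
        (fun ω => A0 ω = a' ∧ X0 ω = x0 ∧ W0 ω = w0 ∧ X1 ω = x1 ∧ W1 ω = w1))
    -- the candidate bridge functions, defined by iterated regression
    (h1 : Bool × Bool → (𝒳0 × 𝒲0) × (𝒳1 × 𝒲1) → ℝ)
    (h0 : Bool × Bool → 𝒳0 × 𝒲0 → ℝ)
    (hh1 : ∀ l0 l1, h1 (a0, a1) (l0, l1) =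
      cexp p Y (fun ω => A0 ω = a0 ∧ A1 ω = a1 ∧ (X0 ω, W0 ω) = l0 ∧ (X1 ω, W1 ω) = l1))
    (hh0 : ∀ l0, h0 (a0, a1) l0 =
      cexp p (fun ω => h1 (a0, a1) ((X0 ω, W0 ω), (X1 ω, W1 ω)))
        (fun ω => A0 ω = a0 ∧ (X0 ω, W0 ω) = l0)) :
    -- first bridge equation (conditioning proxies Z̄(1) = W̄(1))
    (∀ w0 w1 x0 x1,
      pr p (fun ω => A0 ω = a0 ∧ A1 ω = a1 ∧ W0 ω = w0 ∧ W1 ω = w1 ∧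
        X0 ω = x0 ∧ X1 ω = x1) ≠ 0 →
      cexp p Y (fun ω => A0 ω = a0 ∧ A1 ω = a1 ∧ W0 ω = w0 ∧ W1 ω = w1 ∧
          X0 ω = x0 ∧ X1 ω = x1) =
        cexp p (fun ω => h1 (a0, a1) ((X0 ω, W0 ω), (X1 ω, W1 ω)))
          (fun ω => A0 ω = a0 ∧ A1 ω = a1 ∧ W0 ω = w0 ∧ W1 ω = w1 ∧
            X0 ω = x0 ∧ X1 ω = x1)) ∧
    -- second bridge equation
    (∀ w0 x0,
      pr p (fun ω => A0 ω = a0 ∧ W0 ω = w0 ∧ X0 ω = x0) ≠ 0 →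
      cexp p (fun ω => h1 (a0, a1) ((X0 ω, W0 ω), (X1 ω, W1 ω)))
          (fun ω => A0 ω = a0 ∧ W0 ω = w0 ∧ X0 ω = x0) =
        cexp p (fun ω => h0 (a0, a1) (X0 ω, W0 ω))
          (fun ω => A0 ω = a0 ∧ W0 ω = w0 ∧ X0 ω = x0)) ∧
    -- the proximal g-formula coincides with Robins' g-formula for E[Y_{ā(1)}]
    pexp p (fun ω => h0 (a0, a1) (X0 ω, W0 ω)) = pexp p (Y' a0 a1) := by
  refine ⟨?_, ?_, ?_⟩
  · -- first bridge equation
    intro w0 w1 x0 x1 hne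
    have hEv : (fun ω => A0 ω = a0 ∧ A1 ω = a1 ∧ (X0 ω, W0 ω) = (x0, w0) ∧
        (X1 ω, W1 ω) = (x1, w1))
        = (fun ω => A0 ω = a0 ∧ A1 ω = a1 ∧ W0 ω = w0 ∧ W1 ω = w1 ∧
            X0 ω = x0 ∧ X1 ω = x1) :=
      event_ext fun ω => by simp only [Prod.mk.injEq]; try tauto
    have hcg : cexp p (fun ω => h1 (a0, a1) ((X0 ω, W0 ω), (X1 ω, W1 ω)))
        (fun ω => A0 ω = a0 ∧ A1 ω = a1 ∧ W0 ω = w0 ∧ W1 ω = w1 ∧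
          X0 ω = x0 ∧ X1 ω = x1)
        = cexp p (fun _ => h1 (a0, a1) ((x0, w0), (x1, w1)))
        (fun ω => A0 ω = a0 ∧ A1 ω = a1 ∧ W0 ω = w0 ∧ W1 ω = w1 ∧
          X0 ω = x0 ∧ X1 ω = x1) :=
      cexp_congr p fun ω hω => by
        rw [hω.2.2.1, hω.2.2.2.1, hω.2.2.2.2.1, hω.2.2.2.2.2]
    rw [hcg, cexp_const p hne, hh1 (x0, w0) (x1, w1), hEv]
  · -- second bridge equation
    intro w0 x0 hne
    have hEv : (fun ω => A0 ω = a0 ∧ (X0 ω, W0 ω) = (x0, w0))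
        = (fun ω => A0 ω = a0 ∧ W0 ω = w0 ∧ X0 ω = x0) :=
      event_ext fun ω => by simp only [Prod.mk.injEq]; try tauto
    have hcg : cexp p (fun ω => h0 (a0, a1) (X0 ω, W0 ω))
        (fun ω => A0 ω = a0 ∧ W0 ω = w0 ∧ X0 ω = x0)
        = cexp p (fun _ => h0 (a0, a1) (x0, w0))
        (fun ω => A0 ω = a0 ∧ W0 ω = w0 ∧ X0 ω = x0) :=
      cexp_congr p fun ω hω => by rw [hω.2.1, hω.2.2]
    rw [hcg, cexp_const p hne, hh0 (x0, w0), hEv]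
  · -- the g-formula
    refine tower p hp (Y' a0 a1) _ (fun ω => (X0 ω, W0 ω)) fun ω0 hp0 => ?_
    rw [hh0 (X0 ω0, W0 ω0)]
    -- Step II: conditional tower over (X1, W1) strata within the event
    have hct : cexp p (fun ω => h1 (a0, a1) ((X0 ω, W0 ω), (X1 ω, W1 ω)))
        (fun ω => A0 ω = a0 ∧ (X0 ω, W0 ω) = (X0 ω0, W0 ω0))
        = cexp p (Y' a0 a1)
        (fun ω => A0 ω = a0 ∧ (X0 ω, W0 ω) = (X0 ω0, W0 ω0)) := by
      refine ctower p hp (Y' a0 a1) _ _ (fun ω => (X1 ω, W1 ω)) fun ω hEc hpω => ?_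
      rw [hh1 (X0 ω, W0 ω) (X1 ω, W1 ω)]
      -- consistency: replace Y by Y' a0 a1 on the conditioning event
      have hY : cexp p Y (fun ω' => A0 ω' = a0 ∧ A1 ω' = a1 ∧
          (X0 ω', W0 ω') = (X0 ω, W0 ω) ∧ (X1 ω', W1 ω') = (X1 ω, W1 ω))
          = cexp p (Y' a0 a1) (fun ω' => A0 ω' = a0 ∧ A1 ω' = a1 ∧
          (X0 ω', W0 ω') = (X0 ω, W0 ω) ∧ (X1 ω', W1 ω') = (X1 ω, W1 ω)) :=
        cexp_congr p fun ω' hω' => by rw [hcons ω', hω'.1, hω'.2.1]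
      rw [hY]
      -- rewrite the event in the `S = a ∧ C = c` form
      have hEv1 : (fun ω' => A1 ω' = a1 ∧
          (A0 ω', X0 ω', W0 ω', X1 ω', W1 ω') = (a0, X0 ω, W0 ω, X1 ω, W1 ω))
          = (fun ω' => A0 ω' = a0 ∧ A1 ω' = a1 ∧
          (X0 ω', W0 ω') = (X0 ω, W0 ω) ∧ (X1 ω', W1 ω') = (X1 ω, W1 ω)) :=
        event_ext fun ω' => by simp only [Prod.mk.injEq]; try tauto
      rw [← hEv1]
      -- apply conditional independence at occasion 1
      have hCω : (A0 ω, X0 ω, W0 ω, X1 ω, W1 ω) = (a0, X0 ω, W0 ω, X1 ω, W1 ω) := by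
        rw [hEc.1]
      have hq : pr p (fun ω' => (A0 ω', X0 ω', W0 ω', X1 ω', W1 ω')
          = (a0, X0 ω, W0 ω, X1 ω, W1 ω)) ≠ 0 :=
        ne_of_gt (pr_pos p hp _ hCω hpω)
      have hEvD : (fun ω' => A0 ω' = a0 ∧ X0 ω' = X0 ω ∧ W0 ω' = W0 ω ∧
          X1 ω' = X1 ω ∧ W1 ω' = W1 ω)
          = (fun ω' => (A0 ω', X0 ω', W0 ω', X1 ω', W1 ω')
            = (a0, X0 ω, W0 ω, X1 ω, W1 ω)) :=
        event_ext fun ω' => by simp only [Prod.mk.injEq]; try tauto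
      have hD : pr p (fun ω' => A0 ω' = a0 ∧ X0 ω' = X0 ω ∧ W0 ω' = W0 ω ∧
          X1 ω' = X1 ω ∧ W1 ω' = W1 ω) ≠ 0 := by
        rw [hEvD]; exact hq
      have hqA : pr p (fun ω' => A1 ω' = a1 ∧ (A0 ω', X0 ω', W0 ω', X1 ω', W1 ω')
          = (a0, X0 ω, W0 ω, X1 ω, W1 ω)) ≠ 0 := by
        have h2 := cprob_num_ne p hp hD (hpos1 a1 a0 (X0 ω) (W0 ω) (X1 ω) (W1 ω) hD)
        rw [show (fun ω' => A1 ω' = a1 ∧ (A0 ω', X0 ω', W0 ω', X1 ω', W1 ω')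
            = (a0, X0 ω, W0 ω, X1 ω, W1 ω))
            = (fun ω' => A1 ω' = a1 ∧ A0 ω' = a0 ∧ X0 ω' = X0 ω ∧ W0 ω' = W0 ω ∧
              X1 ω' = X1 ω ∧ W1 ω' = W1 ω) from
          event_ext fun ω' => by simp only [Prod.mk.injEq]; try tauto]
        exact h2
      have hCI := condIndep_cexp p A1 (fun ω => Y' a0 a1 ω)
        (fun ω => (A0 ω, X0 ω, W0 ω, X1 ω, W1 ω)) hSRA1 a1
        (a0, X0 ω, W0 ω, X1 ω, W1 ω) hq hqA
      rw [hCI]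
      -- identify the conditioning events
      congr 1
      refine event_ext fun ω' => ?_
      have h0x : X0 ω = X0 ω0 := congrArg Prod.fst hEc.2
      have h0w : W0 ω = W0 ω0 := congrArg Prod.snd hEc.2
      simp only [Prod.mk.injEq]
      constructor
      · rintro ⟨ha, hx0, hw0, hx1, hw1⟩
        exact ⟨⟨ha, hx0.trans h0x, hw0.trans h0w⟩, hx1, hw1⟩
      · rintro ⟨⟨ha, hx0, hw0⟩, hx1, hw1⟩
        exact ⟨ha, hx0.trans h0x.symm, hw0.trans h0w.symm, hx1, hw1⟩
    rw [hct]
    -- Step III: conditional independence at occasion 0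
    have hq : pr p (fun ω => (X0 ω, W0 ω) = (X0 ω0, W0 ω0)) ≠ 0 :=
      ne_of_gt (pr_pos p hp _ rfl hp0)
    have hEvD : (fun ω => X0 ω = X0 ω0 ∧ W0 ω = W0 ω0)
        = (fun ω => (X0 ω, W0 ω) = (X0 ω0, W0 ω0)) :=
      event_ext fun ω => by simp only [Prod.mk.injEq]; try tauto
    have hD : pr p (fun ω => X0 ω = X0 ω0 ∧ W0 ω = W0 ω0) ≠ 0 := by
      rw [hEvD]; exact hq
    have hqA : pr p (fun ω => A0 ω = a0 ∧ (X0 ω, W0 ω) = (X0 ω0, W0 ω0)) ≠ 0 := by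
      have h2 := cprob_num_ne p hp hD (hpos0 a0 (X0 ω0) (W0 ω0) hD)
      rw [show (fun ω => A0 ω = a0 ∧ (X0 ω, W0 ω) = (X0 ω0, W0 ω0))
          = (fun ω => A0 ω = a0 ∧ X0 ω = X0 ω0 ∧ W0 ω = W0 ω0) from
        event_ext fun ω => by simp only [Prod.mk.injEq]; try tauto]
      exact h2
    exact condIndep_cexp p A0 (fun ω => Y' a0 a1 ω) (fun ω => (X0 ω, W0 ω))
      hSRA0 a0 (X0 ω0, W0 ω0) hq hqA
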